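/- For every integer p ≥ 2, define the triangle F^p(n,k) for n ≥ 0 and 0 ≤ k ≤ n by the initial conditions F^p(0,0) = 1, F^p(n,0) = 0 for n > 0, and the recurrence F^p(n,k) = Σ_{j=k−1}^{n−1} C(j−k+p−1, p−2)·F^p(n−1, j) for n > 0 and 0 < k ≤ n. Then for every n ≥ 0, the row sum Σ_{k=0}^{n} F^p(n,k) equals the Fuss–Catalan number A_n^p = (1/(pn+1))·C(pn+1, n). -/

import Mathlib

open Finset in
private lemma hockey (b r : ℕ) :
    ∑ s ∈ range (r + 1), (b + s).choose s = (b + r + 1).choose r := by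
  induction r with
  | zero => simp
  | succ r ih =>
    rw [Finset.sum_range_succ, ih]
    exact (Nat.choose_succ_succ' (b + r + 1) r).symm

open Finset in
private lemma vand (b : ℕ) : ∀ a r : ℕ,
    ∑ t ∈ range (r + 1), (a + t).choose t * (b + (r - t)).choose (r - t)
      = (a + b + r + 1).choose r := by
  intro a
  induction a with
  | zero =>
    intro r
    calc ∑ t ∈ range (r + 1), (0 + t).choose t * (b + (r - t)).choose (r - t)
        = ∑ t ∈ range (r + 1), (b + (r + 1 - 1 - t)).choose (r + 1 - 1 - t) := by
          refine sum_congr rfl fun t ht => ?_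
          simp only [zero_add, Nat.choose_self, one_mul]
          congr 1 <;> omega
      _ = ∑ t ∈ range (r + 1), (b + t).choose t :=
          sum_range_reflect (fun s => (b + s).choose s) (r + 1)
      _ = (0 + b + r + 1).choose r := by rw [hockey]; congr 1; omega
  | succ a ih =>
    intro r
    induction r with
    | zero => simp
    | succ r ihr =>
      rw [sum_range_succ' _ (r + 1)]
      have key : ∀ t ∈ range (r + 1),
          (a + 1 + (t + 1)).choose (t + 1) * (b + (r + 1 - (t + 1))).choose (r + 1 - (t + 1))
            = (a + (t + 1)).choose (t + 1) * (b + (r + 1 - (t + 1))).choose (r + 1 - (t + 1))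
              + (a + 1 + t).choose t * (b + (r - t)).choose (r - t) := by
        intro t _
        rw [show a + 1 + (t + 1) = (a + t + 1) + 1 by omega, Nat.choose_succ_succ,
          show r + 1 - (t + 1) = r - t by omega, add_mul]
        rw [show a + (t + 1) = a + t + 1 by omega, show a + 1 + t = a + t + 1 by omega,
          Nat.succ_eq_add_one]
        ring
      rw [sum_congr rfl key, sum_add_distrib, ihr]
      have h0 : (a + 1 + 0).choose 0 * (b + (r + 1 - 0)).choose (r + 1 - 0)
          = (a + 0).choose 0 * (b + (r + 1 - 0)).choose (r + 1 - 0) := by simp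
      rw [h0, add_right_comm]
      have hA : (∑ x ∈ range (r + 1),
            (a + (x + 1)).choose (x + 1) * (b + (r + 1 - (x + 1))).choose (r + 1 - (x + 1)))
          + (a + 0).choose 0 * (b + (r + 1 - 0)).choose (r + 1 - 0)
          = (a + b + (r + 1) + 1).choose (r + 1) :=
        (sum_range_succ' (fun t => (a + t).choose t * (b + (r + 1 - t)).choose (r + 1 - t))
          (r + 1)).symm.trans (ih (r + 1))
      rw [hA, show a + 1 + b + r + 1 = a + b + (r + 1) + 1 by omega,
        show a + 1 + b + (r + 1) + 1 = (a + b + (r + 1) + 1) + 1 by omega, add_comm]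
      exact (Nat.choose_succ_succ' (a + b + (r + 1) + 1) r).symm

open Finset in
private lemma S1 (p n k : ℕ) (hp : 2 ≤ p) (hn : 1 ≤ n) (hk : 1 ≤ k) (hkn : k ≤ n) :
    ∑ j ∈ Icc (k - 1) n, (j + p - 1 - k).choose (p - 2) * (p * n - j - 1).choose (n - j)
      = (p * (n + 1) - k - 1).choose (n + 1 - k) := by
  have hq1 : (p - 1) * n + n = p * n := by
    have h : (p - 1 + 1) * n = (p - 1) * n + n := by ring
    rw [show p - 1 + 1 = p by omega] at h
    omega
  have hq2 : p * (n + 1) = p * n + p := by ring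
  have h1n : 1 ≤ (p - 1) * n := Nat.mul_pos (by omega) hn
  rw [← Finset.Ico_add_one_right_eq_Icc, Finset.sum_Ico_eq_sum_range,
    show n + 1 - (k - 1) = (n + 1 - k) + 1 by omega]
  have step : ∀ t ∈ range ((n + 1 - k) + 1),
      ((k - 1 + t) + p - 1 - k).choose (p - 2)
          * (p * n - (k - 1 + t) - 1).choose (n - (k - 1 + t))
        = ((p - 2) + t).choose t
          * (((p - 1) * n - 1) + ((n + 1 - k) - t)).choose ((n + 1 - k) - t) := by
    intro t ht
    simp only [mem_range] at ht
    rw [show (k - 1 + t) + p - 1 - k = (p - 2) + t by omega,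
      show p * n - (k - 1 + t) - 1 = ((p - 1) * n - 1) + ((n + 1 - k) - t) by omega,
      show n - (k - 1 + t) = (n + 1 - k) - t by omega, Nat.choose_symm_add]
  rw [sum_congr rfl step, vand ((p - 1) * n - 1) (p - 2) (n + 1 - k)]
  congr 1
  omega

open Finset in
private lemma S2 (p n k : ℕ) (hp : 2 ≤ p) (hn : 1 ≤ n) (hk : 1 ≤ k) (hkn : k ≤ n) :
    ∑ j ∈ Icc (k - 1) n, (j + p - 1 - k).choose (p - 2) * (p * n - j - 1).choose ((p - 1) * n)
      = (p * (n + 1) - k - 1).choose ((p - 1) * (n + 1)) := by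
  obtain ⟨m, rfl⟩ : ∃ m, n = m + 1 := ⟨n - 1, by omega⟩
  have hq1 : (p - 1) * (m + 1) + (m + 1) = p * (m + 1) := by
    have h : (p - 1 + 1) * (m + 1) = (p - 1) * (m + 1) + (m + 1) := by ring
    rw [show p - 1 + 1 = p by omega] at h
    omega
  have hq2 : p * (m + 1 + 1) = p * (m + 1) + p := by ring
  have hq3 : (p - 1) * (m + 1 + 1) = (p - 1) * (m + 1) + (p - 1) := by ring
  have h1n : 1 ≤ (p - 1) * (m + 1) := Nat.mul_pos (by omega) (by omega)
  rw [Finset.sum_Icc_succ_top (by omega : k - 1 ≤ m + 1)]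
  rw [show p * (m + 1) - (m + 1) - 1 = (p - 1) * (m + 1) - 1 by omega,
    Nat.choose_eq_zero_of_lt (show (p - 1) * (m + 1) - 1 < (p - 1) * (m + 1) by omega),
    mul_zero, add_zero]
  rw [← Finset.Ico_add_one_right_eq_Icc, Finset.sum_Ico_eq_sum_range,
    show m + 1 - (k - 1) = (m + 1 - k) + 1 by omega]
  have step : ∀ t ∈ range ((m + 1 - k) + 1),
      ((k - 1 + t) + p - 1 - k).choose (p - 2)
          * (p * (m + 1) - (k - 1 + t) - 1).choose ((p - 1) * (m + 1))
        = ((p - 2) + t).choose t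
          * (((p - 1) * (m + 1)) + ((m + 1 - k) - t)).choose ((m + 1 - k) - t) := by
    intro t ht
    simp only [mem_range] at ht
    rw [show (k - 1 + t) + p - 1 - k = (p - 2) + t by omega,
      show p * (m + 1) - (k - 1 + t) - 1
        = ((p - 1) * (m + 1)) + ((m + 1 - k) - t) by omega,
      Nat.choose_symm_add, Nat.choose_symm_add]
  rw [sum_congr rfl step, vand ((p - 1) * (m + 1)) (p - 2) (m + 1 - k)]
  rw [Nat.choose_symm_of_eq_add
    (show p * (m + 1 + 1) - k - 1 = (p - 1) * (m + 1 + 1) + (m + 1 - k) by omega)]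
  congr 1 <;> omega

/-- The triangle `F^p(n,k)`: `F^p(0,0) = 1`, `F^p(n,0) = 0` for `n > 0`, and for `n > 0`,
`0 < k ≤ n`, `F^p(n,k) = Σ_{j=k−1}^{n−1} C(j−k+p−1, p−2)·F^p(n−1, j)`.
(Note `j + p - 1 - k` equals `j − k + p − 1` over ℤ whenever `j ≥ k − 1` and `p ≥ 2`.) -/
def F (p : ℕ) : ℕ → ℕ → ℕ
  | 0, k => if k = 0 then 1 else 0
  | n + 1, k =>
    if k = 0 then 0
    else ∑ j ∈ Finset.Icc (k - 1) n, Nat.choose (j + p - 1 - k) (p - 2) * F p n j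

/-- Closed form for the triangle entries. -/
private def Gc (p n k : ℕ) : ℤ :=
  ((p * n - k - 1).choose (n - k) : ℤ)
    - ((p - 1 : ℕ) : ℤ) * ((p * n - k - 1).choose ((p - 1) * n) : ℤ)

private lemma Gc_zero (p n : ℕ) (hp : 2 ≤ p) (hn : 1 ≤ n) : Gc p n 0 = 0 := by
  obtain ⟨m, rfl⟩ : ∃ m, n = m + 1 := ⟨n - 1, by omega⟩
  have hq1 : (p - 1) * (m + 1) + (m + 1) = p * (m + 1) := by
    have h : (p - 1 + 1) * (m + 1) = (p - 1) * (m + 1) + (m + 1) := by ring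
    rw [show p - 1 + 1 = p by omega] at h
    omega
  have key : (p * (m + 1) - 1).choose (m + 1)
      = (p - 1) * (p * (m + 1) - 1).choose ((p - 1) * (m + 1)) := by
    rw [Nat.choose_symm_of_eq_add
      (show p * (m + 1) - 1 = (p - 1) * (m + 1) + m by omega)]
    have h := Nat.choose_succ_right_eq (p * (m + 1) - 1) m
    rw [show p * (m + 1) - 1 - m = (p - 1) * (m + 1) by omega] at h
    exact Nat.eq_of_mul_eq_mul_right (show 0 < m + 1 by omega) (h.trans (by ring))
  simp only [Gc, Nat.sub_zero]
  rw [key]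
  push_cast
  ring

private lemma Gc_diag (p n : ℕ) (hp : 2 ≤ p) (hn : 1 ≤ n) : Gc p n n = 1 := by
  have hq1 : (p - 1) * n + n = p * n := by
    have h : (p - 1 + 1) * n = (p - 1) * n + n := by ring
    rw [show p - 1 + 1 = p by omega] at h
    omega
  have h1n : 1 ≤ (p - 1) * n := Nat.mul_pos (by omega) hn
  simp only [Gc, Nat.sub_self, Nat.choose_zero_right]
  rw [Nat.choose_eq_zero_of_lt (show p * n - n - 1 < (p - 1) * n by omega)]
  simp

open Finset in
private lemma Fval (p : ℕ) (hp : 2 ≤ p) :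
    ∀ n, 1 ≤ n → ∀ k, k ≤ n → (F p n k : ℤ) = Gc p n k := by
  intro n
  induction n with
  | zero => intro h; exact absurd h (by omega)
  | succ n ih =>
    intro _ k hk
    rcases Nat.eq_zero_or_pos k with rfl | hk1
    · rw [show F p (n + 1) 0 = 0 from by simp [F], Gc_zero p (n + 1) hp (by omega)]
      simp
    rcases Nat.eq_zero_or_pos n with rfl | hn
    · have hk' : k = 1 := by omega
      subst hk'
      have hF : F p 1 1 = 1 := by
        simp [F, show p - 1 - 1 = p - 2 by omega]
      rw [hF, Gc_diag p 1 hp le_rfl]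
      simp
    rcases eq_or_lt_of_le hk with rfl | hklt
    · have hF : F p (n + 1) (n + 1) = F p n n := by
        simp only [F, if_neg (by omega : ¬ n + 1 = 0)]
        rw [show n + 1 - 1 = n by omega, Finset.Icc_self, Finset.sum_singleton,
          show n + p - 1 - (n + 1) = p - 2 by omega, Nat.choose_self, one_mul]
      rw [hF, ih hn n le_rfl, Gc_diag p n hp hn, Gc_diag p (n + 1) hp (by omega)]
    · have hkn : k ≤ n := by omega
      have hF : F p (n + 1) k
          = ∑ j ∈ Icc (k - 1) n, (j + p - 1 - k).choose (p - 2) * F p n j := by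
        simp only [F, if_neg (by omega : ¬ k = 0)]
      calc (F p (n + 1) k : ℤ)
          = ∑ j ∈ Icc (k - 1) n, ((j + p - 1 - k).choose (p - 2) : ℤ) * Gc p n j := by
            rw [hF]
            push_cast
            refine sum_congr rfl fun j hj => ?_
            rw [mem_Icc] at hj
            rw [ih hn j hj.2]
        _ = ((∑ j ∈ Icc (k - 1) n, (j + p - 1 - k).choose (p - 2)
                * (p * n - j - 1).choose (n - j) : ℕ) : ℤ)
            - ((p - 1 : ℕ) : ℤ) * ((∑ j ∈ Icc (k - 1) n, (j + p - 1 - k).choose (p - 2)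
                * (p * n - j - 1).choose ((p - 1) * n) : ℕ) : ℤ) := by
            push_cast
            rw [mul_sum, ← sum_sub_distrib]
            refine sum_congr rfl fun j hj => ?_
            simp only [Gc]
            ring
        _ = Gc p (n + 1) k := by
            rw [S1 p n k hp hn hk1 hkn, S2 p n k hp hn hk1 hkn]
            simp only [Gc]

open Finset in
private lemma T1 (p n : ℕ) (hp : 2 ≤ p) (hn : 1 ≤ n) :
    ∑ k ∈ range (n + 1), (p * n - k - 1).choose (n - k) = (p * n).choose n := by
  have hq1 : (p - 1) * n + n = p * n := by
    have h : (p - 1 + 1) * n = (p - 1) * n + n := by ring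
    rw [show p - 1 + 1 = p by omega] at h
    omega
  have h1n : 1 ≤ (p - 1) * n := Nat.mul_pos (by omega) hn
  calc ∑ k ∈ range (n + 1), (p * n - k - 1).choose (n - k)
      = ∑ k ∈ range (n + 1),
          (((p - 1) * n - 1) + (n + 1 - 1 - k)).choose (n + 1 - 1 - k) := by
        refine sum_congr rfl fun k hk => ?_
        simp only [mem_range] at hk
        congr 1 <;> omega
    _ = ∑ k ∈ range (n + 1), (((p - 1) * n - 1) + k).choose k :=
        sum_range_reflect (fun s => (((p - 1) * n - 1) + s).choose s) (n + 1)
    _ = (p * n).choose n := by rw [hockey]; congr 1; omega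

open Finset in
private lemma T2 (p n : ℕ) (hp : 2 ≤ p) (hn : 1 ≤ n) :
    ∑ k ∈ range (n + 1), (p * n - k - 1).choose ((p - 1) * n) = (p * n).choose (n - 1) := by
  obtain ⟨m, rfl⟩ : ∃ m, n = m + 1 := ⟨n - 1, by omega⟩
  have hq1 : (p - 1) * (m + 1) + (m + 1) = p * (m + 1) := by
    have h : (p - 1 + 1) * (m + 1) = (p - 1) * (m + 1) + (m + 1) := by ring
    rw [show p - 1 + 1 = p by omega] at h
    omega
  have h1n : 1 ≤ (p - 1) * (m + 1) := Nat.mul_pos (by omega) (by omega)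
  rw [sum_range_succ,
    show p * (m + 1) - (m + 1) - 1 = (p - 1) * (m + 1) - 1 by omega,
    Nat.choose_eq_zero_of_lt (show (p - 1) * (m + 1) - 1 < (p - 1) * (m + 1) by omega),
    add_zero]
  calc ∑ k ∈ range (m + 1), (p * (m + 1) - k - 1).choose ((p - 1) * (m + 1))
      = ∑ k ∈ range (m + 1),
          (((p - 1) * (m + 1)) + (m + 1 - 1 - k)).choose (m + 1 - 1 - k) := by
        refine sum_congr rfl fun k hk => ?_
        simp only [mem_range] at hk
        rw [show p * (m + 1) - k - 1 = ((p - 1) * (m + 1)) + (m + 1 - 1 - k) by omega,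
          Nat.choose_symm_add]
    _ = ∑ k ∈ range (m + 1), (((p - 1) * (m + 1)) + k).choose k :=
        sum_range_reflect (fun s => (((p - 1) * (m + 1)) + s).choose s) (m + 1)
    _ = (p * (m + 1)).choose (m + 1 - 1) := by rw [hockey]; congr 1 <;> omega

/-- For every integer `p ≥ 2` and every `n ≥ 0`, the row sum `Σ_{k=0}^{n} F^p(n,k)` equals
the Fuss–Catalan number `A_n^p = (1/(pn+1))·C(pn+1, n)`. -/
theorem row_sums_of_F_triangle_are_fussCatalan (p : ℕ) (hp : 2 ≤ p) (n : ℕ) :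
    ∑ k ∈ Finset.range (n + 1), F p n k = (p * n + 1).choose n / (p * n + 1) := by
  classical
  rcases Nat.eq_zero_or_pos n with rfl | hn
  · simp [F]
  have hZ : ((∑ k ∈ Finset.range (n + 1), F p n k : ℕ) : ℤ)
      = ((p * n).choose n : ℤ) - ((p - 1 : ℕ) : ℤ) * ((p * n).choose (n - 1) : ℤ) := by
    push_cast
    rw [Finset.sum_congr rfl
      (fun k hk => Fval p hp n hn k (by simp only [Finset.mem_range] at hk; omega))]
    show ∑ k ∈ Finset.range (n + 1), Gc p n k = _
    simp only [Gc]
    rw [Finset.sum_sub_distrib, ← Finset.mul_sum, ← Nat.cast_sum, ← Nat.cast_sum,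
      T1 p n hp hn, T2 p n hp hn]
  have pascal : ((p * n + 1).choose n : ℤ)
      = ((p * n).choose n : ℤ) + ((p * n).choose (n - 1) : ℤ) := by
    have h := Nat.choose_succ_succ' (p * n) (n - 1)
    rw [show n - 1 + 1 = n by omega] at h
    rw [h]
    push_cast
    ring
  have hrel : ((p * n).choose n : ℤ) * n
      = ((p * n).choose (n - 1) : ℤ) * (((p : ℤ) - 1) * n + 1) := by
    have hq1 : (p - 1) * n + n = p * n := by
      have h : (p - 1 + 1) * n = (p - 1) * n + n := by ring
      rw [show p - 1 + 1 = p by omega] at h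
      omega
    have h := Nat.choose_succ_right_eq (p * n) (n - 1)
    rw [show n - 1 + 1 = n by omega,
      show p * n - (n - 1) = (p - 1) * n + 1 by omega] at h
    have h' : (((p * n).choose n : ℕ) : ℤ) * n
        = ((p * n).choose (n - 1) : ℤ) * (((p - 1) * n : ℕ) + 1) := by exact_mod_cast h
    rw [h']
    congr 1
    push_cast [show 1 ≤ p by omega]
    ring
  have hc : ((p - 1 : ℕ) : ℤ) = (p : ℤ) - 1 := by
    push_cast [show 1 ≤ p by omega]
    ring
  have hmain : (((p : ℤ) * n) + 1)
      * (((p * n).choose n : ℤ) - ((p : ℤ) - 1) * ((p * n).choose (n - 1) : ℤ))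
      = ((p * n).choose n : ℤ) + ((p * n).choose (n - 1) : ℤ) := by
    have hNne : (n : ℤ) ≠ 0 := by
      simpa using (by omega : n ≠ 0)
    refine mul_left_cancel₀ hNne ?_
    linear_combination ((p : ℤ) * n) * hrel
  have final : ((p * n + 1 : ℕ) : ℤ) * ((∑ k ∈ Finset.range (n + 1), F p n k : ℕ) : ℤ)
      = ((p * n + 1).choose n : ℤ) := by
    rw [hZ, pascal, hc]
    push_cast
    exact hmain
  have hnat : (p * n + 1) * (∑ k ∈ Finset.range (n + 1), F p n k) = (p * n + 1).choose n := by
    exact_mod_cast final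
  exact (Nat.div_eq_of_eq_mul_left (by omega : 0 < p * n + 1)
    (by rw [← hnat]; ring)).symm
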